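/- Let $\Gamma$ be a finite rooted tree with root $a$, and let $\{U_t\}_{t\in\Gamma}$ be measurable subsets of a bounded domain $\Omega\subset\mathbb{R}^n$ and $\{B_t\}_{t\in\Gamma^*}$ pairwise disjoint sets of positive measure with $B_t\subset U_t\cap U_{t_p}$ (where $t_p$ is the parent of $t$). Let $\{\phi_t\}_{t\in\Gamma}$ be a measurable partition of unity with $\mathrm{supp}(\phi_t)\subset U_t$, $0\le\phi_t\le 1$, $\sum_t\phi_t=1$ on $\Omega$. Given $g\in L^1(\Omega)$ with $\int_\Omega g = 0$, set $f_t=g\phi_t$, $W_s=\bigcup_{k\succeq s}U_k$, $h_s = \frac{\chi_{B_s}}{|B_s|}\int_{W_s}\sum_{k\succeq s}f_k$ for $s\ne a$, and define $g_t = f_t + \sum_{s: s_p=t} h_s - h_t$ for $t\ne a$ and $g_a = f_a + \sum_{s:s_p=a}h_s$. Then: (1) $\sum_{t\in\Gamma} g_t = g$; (2) $\mathrm{supp}(g_t)\subset U_t$ for every $t$; (3) $\int_\Omega g_t = 0$ for every $t\in\Gamma$. -/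

import Mathlib

open MeasureTheory Finset
open scoped Classical

noncomputable section

/-- `s ⪯ t` in the rooted tree with parent map `par`: `s` lies on the path from the root to `t`. -/
def treeLe {Γ : Type*} (par : Γ → Γ) (s t : Γ) : Prop := ∃ m : ℕ, par^[m] t = s

/-- The shadow `W_s = ⋃_{k ⪰ s} U_k`. -/
def Wset {n : ℕ} {Γ : Type*} (par : Γ → Γ) (U : Γ → Set (EuclideanSpace ℝ (Fin n)))
    (s : Γ) : Set (EuclideanSpace ℝ (Fin n)) :=
  ⋃ k ∈ {k | treeLe par s k}, U k

/-- `h_s = (χ_{B_s}/|B_s|) ∫_{W_s} ∑_{k ⪰ s} f_k`, where `f_k = g·φ_k`. -/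
def hfun {n : ℕ} {Γ : Type*} [Fintype Γ] (par : Γ → Γ)
    (U B : Γ → Set (EuclideanSpace ℝ (Fin n)))
    (g : EuclideanSpace ℝ (Fin n) → ℝ) (φ : Γ → EuclideanSpace ℝ (Fin n) → ℝ)
    (s : Γ) (x : EuclideanSpace ℝ (Fin n)) : ℝ :=
  (B s).indicator
    (fun _ => (volume (B s)).toReal⁻¹ *
      ∫ y in Wset par U s,
        ∑ k ∈ Finset.univ.filter (fun k => treeLe par s k), g y * φ k y) x

/-- The pieces `g_t` of the `𝒞`-orthogonal decomposition. -/
def gdec {n : ℕ} {Γ : Type*} [Fintype Γ] (a : Γ) (par : Γ → Γ)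
    (U B : Γ → Set (EuclideanSpace ℝ (Fin n)))
    (g : EuclideanSpace ℝ (Fin n) → ℝ) (φ : Γ → EuclideanSpace ℝ (Fin n) → ℝ)
    (t : Γ) (x : EuclideanSpace ℝ (Fin n)) : ℝ :=
  if t = a then
    g x * φ t x +
      ∑ s ∈ Finset.univ.filter (fun s => par s = t ∧ s ≠ a), hfun par U B g φ s x
  else
    g x * φ t x +
      (∑ s ∈ Finset.univ.filter (fun s => par s = t ∧ s ≠ a), hfun par U B g φ s x) -
      hfun par U B g φ t x

section Aux
variable {Γ : Type*} (par : Γ → Γ) (a : Γ)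

lemma root_fixed (hroot : par a = a) (m : ℕ) : par^[m] a = a :=
  Function.iterate_fixed hroot m

lemma periodic_eq_root (hroot : par a = a) (hreach : ∀ t, ∃ m : ℕ, par^[m] t = a)
    {t : Γ} {d : ℕ} (hd : 1 ≤ d) (h : par^[d] t = t) : t = a := by
  obtain ⟨m, hm⟩ := hreach t
  rcases Nat.eq_zero_or_pos m with hm0 | hm0
  · simpa [hm0] using hm
  have hdm : ∀ N : ℕ, par^[d * N] t = t := by
    intro N
    induction N with
    | zero => simp
    | succ N ih =>
      rw [Nat.mul_succ, Function.iterate_add_apply, h, ih]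
  have hle : m ≤ d * m := Nat.le_mul_of_pos_left m hd
  calc t = par^[d * m] t := (hdm m).symm
    _ = par^[d * m - m + m] t := by rw [Nat.sub_add_cancel hle]
    _ = par^[d * m - m] (par^[m] t) := Function.iterate_add_apply _ _ _ _
    _ = a := by rw [hm]; exact root_fixed par a hroot _

/-- Comparability along the path: key disjointness fact. -/
lemma children_shadow_disjoint (hroot : par a = a) (hreach : ∀ t, ∃ m : ℕ, par^[m] t = a)
    {t s s' k : Γ} (hs : par s = t) (hs' : par s' = t) (hsa : s ≠ a) (hs'a : s' ≠ a)
    (hks : treeLe par s k) (hks' : treeLe par s' k) : s = s' := by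
  obtain ⟨m, hm⟩ := hks
  obtain ⟨m', hm'⟩ := hks'
  -- wlog m ≤ m'
  by_contra hne
  wlog hmm : m ≤ m' generalizing s s' m m'
  · exact this hs' hs hs'a hsa m' hm' m hm (Ne.symm hne) (le_of_not_ge hmm)
  have hd : s' = par^[m' - m] s := by
    rw [← hm, ← Function.iterate_add_apply, Nat.sub_add_cancel hmm, hm']
  rcases Nat.eq_zero_or_pos (m' - m) with h0 | h0
  · exact hne (by simpa [h0] using hd.symm)
  -- t is periodic with period m' - m
  have hper : par^[m' - m] t = t := by
    have : par^[m' - m] t = par (par^[m' - m] s) := by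
      rw [← hs, ← Function.iterate_succ_apply, Function.iterate_succ_apply']
    rw [this, ← hd, hs']
  have hta : t = a := periodic_eq_root par a hroot hreach h0 hper
  -- then s' = par^[d-1] (par s) = par^[d-1] a = a
  have h1 : s' = par^[m' - m - 1 + 1] s := by
    rw [Nat.sub_add_cancel h0]; exact hd
  rw [Function.iterate_succ_apply, hs, hta] at h1
  exact hs'a (h1.trans (root_fixed par a hroot _))

lemma shadow_self (s : Γ) : treeLe par s s := ⟨0, rfl⟩

lemma shadow_of_child {t s k : Γ} (hs : par s = t) (hk : treeLe par s k) :
    treeLe par t k := by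
  obtain ⟨m, hm⟩ := hk
  exact ⟨m + 1, by rw [Function.iterate_succ_apply', hm, hs]⟩

lemma not_shadow_child (hroot : par a = a) (hreach : ∀ t, ∃ m : ℕ, par^[m] t = a)
    {t s : Γ} (hs : par s = t) (hsa : s ≠ a) : ¬ treeLe par s t := by
  rintro ⟨m, hm⟩
  rcases Nat.eq_zero_or_pos m with h0 | h0
  · -- t = s, then par t = t so t = a, then s = a
    simp only [h0, Function.iterate_zero_apply] at hm
    have : par^[1] t = t := by simpa [hm] using hs
    have hta := periodic_eq_root par a hroot hreach le_rfl this
    exact hsa (hm ▸ hta)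
  · have : par^[m + 1] t = t := by
      rw [Function.iterate_succ_apply', hm, hs]
    have hta := periodic_eq_root par a hroot hreach (Nat.succ_le_succ (Nat.zero_le m)) this
    rw [hta] at hm
    exact hsa ((root_fixed par a hroot m).symm.trans hm).symm

lemma shadow_mem_child (hroot : par a = a)
    {t k : Γ} (hk : treeLe par t k) (hkt : k ≠ t) :
    ∃ s, par s = t ∧ s ≠ a ∧ treeLe par s k := by
  classical
  obtain ⟨m, hm⟩ := hk
  have hex : ∃ m, par^[m] k = t := ⟨m, hm⟩
  set m₀ := Nat.find hex with hm₀def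
  have hm₀ : par^[m₀] k = t := Nat.find_spec hex
  have hm₀pos : 0 < m₀ := by
    rcases Nat.eq_zero_or_pos m₀ with h0 | h0
    · exact absurd (by simpa [h0] using hm₀) hkt
    · exact h0
  have hsucc : m₀ - 1 + 1 = m₀ := Nat.sub_add_cancel hm₀pos
  have hpar : par (par^[m₀ - 1] k) = t := by
    have h2 : par^[m₀ - 1 + 1] k = t := by rw [hsucc]; exact hm₀
    rw [Function.iterate_succ_apply'] at h2; exact h2
  refine ⟨par^[m₀ - 1] k, hpar, ?_, ⟨m₀ - 1, rfl⟩⟩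
  intro hsa
  have hta : t = a := by rw [← hpar, hsa, hroot]
  have : par^[m₀ - 1] k = t := by rw [hsa, hta]
  exact Nat.find_min hex (by omega : m₀ - 1 < m₀) this

variable [Fintype Γ]

lemma shadow_filter_decomp (hroot : par a = a) (hreach : ∀ t, ∃ m : ℕ, par^[m] t = a)
    (t : Γ) :
    Finset.univ.filter (fun k => treeLe par t k)
      = insert t ((Finset.univ.filter (fun s => par s = t ∧ s ≠ a)).biUnion
          (fun s => Finset.univ.filter (fun k => treeLe par s k))) := by
  ext k
  simp only [mem_filter, mem_univ, true_and, mem_insert, mem_biUnion]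
  constructor
  · intro hk
    by_cases hkt : k = t
    · exact Or.inl hkt
    · obtain ⟨s, hs1, hs2, hs3⟩ := shadow_mem_child par a hroot hk hkt
      exact Or.inr ⟨s, ⟨hs1, hs2⟩, hs3⟩
  · rintro (rfl | ⟨s, ⟨hs1, _⟩, hs3⟩)
    · exact ⟨0, rfl⟩
    · exact shadow_of_child par hs1 hs3

lemma sum_shadow {M : Type*} [AddCommMonoid M] (hroot : par a = a)
    (hreach : ∀ t, ∃ m : ℕ, par^[m] t = a) (t : Γ) (F : Γ → M) :
    ∑ k ∈ Finset.univ.filter (fun k => treeLe par t k), F k =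
      F t + ∑ s ∈ Finset.univ.filter (fun s => par s = t ∧ s ≠ a),
        ∑ k ∈ Finset.univ.filter (fun k => treeLe par s k), F k := by
  classical
  rw [shadow_filter_decomp par a hroot hreach t, Finset.sum_insert, Finset.sum_biUnion]
  · intro s hs s' hs' hne
    simp only [coe_filter, Set.mem_setOf_eq, mem_univ, true_and] at hs hs'
    simp only [Finset.disjoint_left, mem_filter, mem_univ, true_and]
    intro k hk hk'
    exact hne (children_shadow_disjoint par a hroot hreach hs.1 hs'.1 hs.2 hs'.2 hk hk')
  · simp only [mem_biUnion, mem_filter, mem_univ, true_and, not_exists]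
    rintro s ⟨⟨hs1, hs2⟩, hst⟩
    exact not_shadow_child par a hroot hreach hs1 hs2 hst

lemma shadow_root_eq_univ (hreach : ∀ t, ∃ m : ℕ, par^[m] t = a) :
    Finset.univ.filter (fun k => treeLe par a k) = Finset.univ := by
  ext k; simp only [mem_filter, mem_univ, true_and, iff_true]; exact hreach k

end Aux

/-- `I_s = ∫_{W_s} ∑_{k ⪰ s} f_k`. -/
def Ifun {n : ℕ} {Γ : Type*} [Fintype Γ] (par : Γ → Γ)
    (U : Γ → Set (EuclideanSpace ℝ (Fin n)))
    (g : EuclideanSpace ℝ (Fin n) → ℝ) (φ : Γ → EuclideanSpace ℝ (Fin n) → ℝ)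
    (s : Γ) : ℝ :=
  ∫ y in Wset par U s,
    ∑ k ∈ Finset.univ.filter (fun k => treeLe par s k), g y * φ k y

theorem stmt10 {n : ℕ} {Γ : Type*} [Fintype Γ] (a : Γ) (par : Γ → Γ)
    (hroot : par a = a) (hreach : ∀ t, ∃ m : ℕ, par^[m] t = a)
    (Ω : Set (EuclideanSpace ℝ (Fin n)))
    (hΩm : MeasurableSet Ω) (hΩb : Bornology.IsBounded Ω)
    (U B : Γ → Set (EuclideanSpace ℝ (Fin n)))
    (hUm : ∀ t, MeasurableSet (U t)) (hBm : ∀ t, MeasurableSet (B t))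
    (hUΩ : ∀ t, U t ⊆ Ω)
    (hBpos : ∀ t, t ≠ a → 0 < volume (B t))
    (hBdisj : ∀ s t, s ≠ a → t ≠ a → s ≠ t → Disjoint (B s) (B t))
    (hBsub : ∀ t, t ≠ a → B t ⊆ U t ∩ U (par t))
    (φ : Γ → EuclideanSpace ℝ (Fin n) → ℝ)
    (hφm : ∀ t, Measurable (φ t))
    (hφsupp : ∀ t x, x ∉ U t → φ t x = 0)
    (hφ0 : ∀ t x, 0 ≤ φ t x) (hφ1 : ∀ t x, φ t x ≤ 1)
    (hφsum : ∀ x ∈ Ω, ∑ t, φ t x = 1)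
    (g : EuclideanSpace ℝ (Fin n) → ℝ)
    (hgm : Measurable g) (hgint : IntegrableOn g Ω)
    (hgmean : ∫ x in Ω, g x = 0) :
    (∀ x ∈ Ω, ∑ t, gdec a par U B g φ t x = g x) ∧
    (∀ t x, gdec a par U B g φ t x ≠ 0 → x ∈ U t) ∧
    (∀ t, ∫ x in Ω, gdec a par U B g φ t x = 0) := by
  classical
  have hΩfin : volume Ω < ⊤ := hΩb.measure_lt_top
  have hBΩ : ∀ s, s ≠ a → B s ⊆ Ω := fun s hs =>
    (hBsub s hs).trans (Set.inter_subset_left.trans (hUΩ s))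
  have hBfin : ∀ s, s ≠ a → volume (B s) < ⊤ := fun s hs =>
    lt_of_le_of_lt (measure_mono (hBΩ s hs)) hΩfin
  have hBtoReal : ∀ s, s ≠ a → (volume (B s)).toReal ≠ 0 := fun s hs =>
    (ENNReal.toReal_pos (hBpos s hs).ne' (hBfin s hs).ne).ne'
  -- integrability of f_k = g·φ_k
  have hfint : ∀ k, IntegrableOn (fun x => g x * φ k x) Ω := by
    intro k
    refine MeasureTheory.Integrable.mono hgint ((hgm.mul (hφm k)).aestronglyMeasurable) ?_
    refine Filter.Eventually.of_forall fun x => ?_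
    have hb : |φ k x| ≤ 1 := abs_le.mpr ⟨by linarith [hφ0 k x], hφ1 k x⟩
    calc ‖g x * φ k x‖ = ‖g x‖ * |φ k x| := by rw [norm_mul]; rfl
      _ ≤ ‖g x‖ * 1 := mul_le_mul_of_nonneg_left hb (norm_nonneg _)
      _ = ‖g x‖ := mul_one _
  have hWm : ∀ t, MeasurableSet (Wset par U t) := fun t =>
    MeasurableSet.biUnion (Set.to_countable _) (fun k _ => hUm k)
  have hWΩ : ∀ t, Wset par U t ⊆ Ω := fun t => Set.iUnion₂_subset fun k _ => hUΩ k
  -- hfun as indicator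
  have hrep : ∀ s, hfun par U B g φ s =
      (B s).indicator (fun _ => (volume (B s)).toReal⁻¹ * Ifun par U g φ s) := fun s => rfl
  -- key: I_t = ∑_{k ⪰ t} ∫_Ω f_k
  have key : ∀ t, Ifun par U g φ t =
      ∑ k ∈ Finset.univ.filter (fun k => treeLe par t k), ∫ x in Ω, g x * φ k x := by
    intro t
    have hzero : ∀ y, y ∉ Wset par U t →
        (∑ k ∈ Finset.univ.filter (fun k => treeLe par t k), g y * φ k y) = 0 := by
      intro y hy
      refine Finset.sum_eq_zero fun k hk => ?_
      have hkU : y ∉ U k := fun hyU =>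
        hy (Set.mem_biUnion (by simpa using (Finset.mem_filter.mp hk).2) hyU)
      rw [hφsupp k y hkU, mul_zero]
    have h1 : Ifun par U g φ t =
        ∫ y in Wset par U t,
          (∑ k ∈ Finset.univ.filter (fun k => treeLe par t k), g y * φ k y)
            ∂(volume.restrict Ω) := by
      rw [Ifun, Measure.restrict_restrict (hWm t),
        Set.inter_eq_self_of_subset_left (hWΩ t)]
    rw [h1, setIntegral_eq_integral_of_forall_compl_eq_zero hzero]
    exact integral_finset_sum _ (fun k _ => hfint k)
  -- integrability and integral of h_s
  have hh_int : ∀ s, s ≠ a → IntegrableOn (hfun par U B g φ s) Ω := by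
    intro s hs
    rw [hrep s]
    exact ((integrable_indicator_iff (hBm s)).2
      (integrableOn_const (hBfin s hs).ne)).integrableOn
  have hh_val : ∀ s, s ≠ a → ∫ x in Ω, hfun par U B g φ s x = Ifun par U g φ s := by
    intro s hs
    rw [show (fun x => hfun par U B g φ s x) =
      (B s).indicator (fun _ => (volume (B s)).toReal⁻¹ * Ifun par U g φ s) from rfl]
    rw [setIntegral_indicator (hBm s), Set.inter_eq_self_of_subset_right (hBΩ s hs),
      setIntegral_const, measureReal_def, smul_eq_mul, ← mul_assoc,
      mul_inv_cancel₀ (hBtoReal s hs), one_mul]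
  -- the telescoping identity
  have main_id : ∀ t, (∫ x in Ω, g x * φ t x) +
      (∑ s ∈ Finset.univ.filter (fun s => par s = t ∧ s ≠ a), Ifun par U g φ s)
        = Ifun par U g φ t := by
    intro t
    rw [key t, sum_shadow par a hroot hreach t]
    congr 1
    refine Finset.sum_congr rfl fun s _ => ?_
    rw [key s]
  have hIva : Ifun par U g φ a = 0 := by
    rw [key a, shadow_root_eq_univ par a hreach,
      ← integral_finset_sum _ (fun k _ => hfint k)]
    have : ∫ x in Ω, (∑ k : Γ, g x * φ k x) = ∫ x in Ω, g x := by
      refine setIntegral_congr_fun hΩm fun x hx => ?_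
      rw [← Finset.mul_sum, hφsum x hx, mul_one]
    rw [this, hgmean]
  refine ⟨?_, ?_, ?_⟩
  · -- (1) sum of the pieces is g
    intro x hx
    have hptw : ∀ t, gdec a par U B g φ t x =
        g x * φ t x +
          (∑ s ∈ Finset.univ.filter (fun s => par s = t ∧ s ≠ a), hfun par U B g φ s x) -
          (if t = a then 0 else hfun par U B g φ t x) := by
      intro t
      by_cases ht : t = a <;> simp [gdec, ht]
    simp only [hptw]
    rw [Finset.sum_sub_distrib, Finset.sum_add_distrib]
    have e1 : ∑ t : Γ, (if t = a then (0:ℝ) else hfun par U B g φ t x)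
        = ∑ t ∈ Finset.univ.filter (fun t => ¬ t = a), hfun par U B g φ t x := by
      rw [Finset.sum_filter]
      refine Finset.sum_congr rfl fun t _ => ?_
      by_cases ht : t = a <;> simp [ht]
    have e2 : ∑ t : Γ, ∑ s ∈ Finset.univ.filter (fun s => par s = t ∧ s ≠ a),
          hfun par U B g φ s x
        = ∑ s ∈ Finset.univ.filter (fun s => ¬ s = a), hfun par U B g φ s x := by
      have hfil : ∀ t : Γ, Finset.univ.filter (fun s => par s = t ∧ s ≠ a)
          = (Finset.univ.filter (fun s => ¬ s = a)).filter (fun s => par s = t) := by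
        intro t
        rw [Finset.filter_filter]
        exact Finset.filter_congr fun s _ => by tauto
      simp only [hfil]
      exact Finset.sum_fiberwise_of_maps_to (fun s _ => Finset.mem_univ (par s)) _
    rw [e1, e2, ← Finset.mul_sum, hφsum x hx, mul_one]
    ring
  · -- (2) supports
    intro t x h
    by_contra hx
    apply h
    have hφz : φ t x = 0 := hφsupp t x hx
    have hchild : ∀ s ∈ Finset.univ.filter (fun s => par s = t ∧ s ≠ a),
        hfun par U B g φ s x = 0 := by
      intro s hs
      obtain ⟨hs1, hs2⟩ := (Finset.mem_filter.mp hs).2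
      exact Set.indicator_of_notMem (fun hxB => hx (hs1 ▸ ((hBsub s hs2) hxB).2)) _
    by_cases ht : t = a
    · rw [gdec, if_pos ht, hφz, mul_zero, zero_add]
      exact Finset.sum_eq_zero hchild
    · have hself : hfun par U B g φ t x = 0 :=
        Set.indicator_of_notMem (fun hxB => hx ((hBsub t ht) hxB).1) _
      rw [gdec, if_neg ht, hφz, mul_zero, zero_add, hself, sub_zero]
      exact Finset.sum_eq_zero hchild
  · -- (3) zero means
    intro t
    have hint_children : ∀ s ∈ Finset.univ.filter (fun s => par s = t ∧ s ≠ a),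
        IntegrableOn (fun x => hfun par U B g φ s x) Ω := fun s hs =>
      hh_int s (Finset.mem_filter.mp hs).2.2
    have hval_children :
        ∑ s ∈ Finset.univ.filter (fun s => par s = t ∧ s ≠ a),
            ∫ x in Ω, hfun par U B g φ s x
          = ∑ s ∈ Finset.univ.filter (fun s => par s = t ∧ s ≠ a), Ifun par U g φ s :=
      Finset.sum_congr rfl fun s hs => hh_val s (Finset.mem_filter.mp hs).2.2
    by_cases ht : t = a
    · have hS : IntegrableOn (fun x => ∑ s ∈ Finset.univ.filter (fun s => par s = t ∧ s ≠ a),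
          hfun par U B g φ s x) Ω := integrable_finset_sum _ hint_children
      have hg1 : (fun x => gdec a par U B g φ t x) = fun x =>
          g x * φ t x +
            ∑ s ∈ Finset.univ.filter (fun s => par s = t ∧ s ≠ a), hfun par U B g φ s x := by
        funext x; rw [gdec, if_pos ht]
      rw [hg1, integral_add (hfint t) hS, integral_finset_sum _ hint_children,
        hval_children, main_id t, ht, hIva]
    · have hS : IntegrableOn (fun x => ∑ s ∈ Finset.univ.filter (fun s => par s = t ∧ s ≠ a),
          hfun par U B g φ s x) Ω := integrable_finset_sum _ hint_children
      have hfs : IntegrableOn (fun x => g x * φ t x +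
          ∑ s ∈ Finset.univ.filter (fun s => par s = t ∧ s ≠ a), hfun par U B g φ s x) Ω :=
        (hfint t).add hS
      have hg1 : (fun x => gdec a par U B g φ t x) = fun x =>
          (g x * φ t x +
            ∑ s ∈ Finset.univ.filter (fun s => par s = t ∧ s ≠ a), hfun par U B g φ s x) -
            hfun par U B g φ t x := by
        funext x; rw [gdec, if_neg ht]
      rw [hg1, integral_sub hfs (hh_int t ht), integral_add (hfint t) hS,
        integral_finset_sum _ hint_children, hval_children, main_id t, hh_val t ht, sub_self]

end
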